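/- Let λ > 0, let (λ_k)_{k≥1} be a strictly increasing sequence of positive reals, let (c_k)_{k≥1} be reals with Σ_{k≥1} |c_k| < ∞, and suppose exp(−λ t) = Σ_{k≥1} c_k exp(−λ_k t) for all t ≥ 0. Then there exists an index k₀ such that λ = λ_{k₀}, c_{k₀} = 1, and c_k = 0 for every k ≠ k₀. -/

import Mathlib

open Filter Real Topology

lemma keyA (lam : ℕ → ℝ) (hmono : StrictMono lam) (c : ℕ → ℝ)
    (hsum : Summable fun k => |c k|) (m : ℕ) (hc : ∀ k < m, c k = 0) :
    Tendsto (fun t => Real.exp (lam m * t) * ∑' k, c k * Real.exp (-lam k * t))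
      atTop (𝓝 (c m)) := by
  set δ : ℝ := lam (m + 1) - lam m with hδdef
  have hδ : 0 < δ := sub_pos.2 (hmono (Nat.lt_succ_self m))
  have hbound : ∀ t : ℝ, 0 ≤ t → ∀ k,
      ‖c k * Real.exp ((lam m - lam k) * t)‖ ≤ |c k| := by
    intro t ht k
    rcases lt_or_ge k m with hk | hk
    · simp [hc k hk]
    · have h1 : (lam m - lam k) * t ≤ 0 :=
        mul_nonpos_of_nonpos_of_nonneg (sub_nonpos.2 (hmono.monotone hk)) ht
      rw [norm_mul, Real.norm_eq_abs, Real.norm_eq_abs, Real.abs_exp]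
      calc |c k| * Real.exp ((lam m - lam k) * t) ≤ |c k| * 1 :=
            mul_le_mul_of_nonneg_left (Real.exp_le_one_iff.2 h1) (abs_nonneg _)
        _ = |c k| := mul_one _
  have hshift : ∀ t : ℝ, 0 ≤ t →
      Summable (fun k => c k * Real.exp ((lam m - lam k) * t)) :=
    fun t ht => Summable.of_norm_bounded hsum (hbound t ht)
  have eq1 : ∀ t : ℝ, 0 ≤ t → Real.exp (lam m * t) * ∑' k, c k * Real.exp (-lam k * t)
      = c m + ∑' k, if k = m then 0 else c k * Real.exp ((lam m - lam k) * t) := by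
    intro t ht
    have e1 : Real.exp (lam m * t) * ∑' k, c k * Real.exp (-lam k * t)
        = ∑' k, c k * Real.exp ((lam m - lam k) * t) := by
      rw [← tsum_mul_left]
      apply tsum_congr; intro k
      rw [mul_comm (Real.exp (lam m * t)), mul_assoc, ← Real.exp_add]
      ring_nf
    rw [e1, Summable.tsum_eq_add_tsum_ite (hshift t ht) m]
    simp
  have hnorm : ∀ t : ℝ, 0 ≤ t →
      ‖∑' k, if k = m then 0 else c k * Real.exp ((lam m - lam k) * t)‖
        ≤ (∑' k, |c k|) * Real.exp (-δ * t) := by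
    intro t ht
    have hb2 : ∀ k, ‖if k = m then (0:ℝ) else c k * Real.exp ((lam m - lam k) * t)‖
        ≤ |c k| * Real.exp (-δ * t) := by
      intro k
      split
      · simp only [norm_zero]; positivity
      · rename_i hkm
        rcases lt_or_ge k m with hk | hk
        · have : c k = 0 := hc k hk
          simp [this]
        · have hk' : m + 1 ≤ k := lt_of_le_of_ne hk (Ne.symm hkm)
          have h1 : lam m - lam k ≤ -δ := by
            have := hmono.monotone hk'
            simp only [hδdef]; linarith
          rw [norm_mul, Real.norm_eq_abs, Real.norm_eq_abs, Real.abs_exp]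
          exact mul_le_mul_of_nonneg_left
            (Real.exp_le_exp.2 (mul_le_mul_of_nonneg_right h1 ht)) (abs_nonneg _)
    have hsumb : Summable fun k => ‖if k = m then (0:ℝ)
        else c k * Real.exp ((lam m - lam k) * t)‖ :=
      Summable.of_nonneg_of_le (fun k => norm_nonneg _) hb2 (hsum.mul_right _)
    calc ‖∑' k, if k = m then (0:ℝ) else c k * Real.exp ((lam m - lam k) * t)‖
        ≤ ∑' k, ‖if k = m then (0:ℝ) else c k * Real.exp ((lam m - lam k) * t)‖ :=
          norm_tsum_le_tsum_norm hsumb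
      _ ≤ ∑' k, |c k| * Real.exp (-δ * t) := Summable.tsum_le_tsum hb2 hsumb (hsum.mul_right _)
      _ = (∑' k, |c k|) * Real.exp (-δ * t) := tsum_mul_right
  have htail : Tendsto (fun t => ∑' k, if k = m then (0:ℝ)
      else c k * Real.exp ((lam m - lam k) * t)) atTop (𝓝 0) := by
    apply squeeze_zero_norm' ((eventually_ge_atTop (0:ℝ)).mono fun t ht => hnorm t ht)
    have h1 : Tendsto (fun t : ℝ => -δ * t) atTop atBot := by
      have := tendsto_const_mul_atTop_of_pos (l := atTop) (f := fun t : ℝ => t) hδ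
      have h2 : Tendsto (fun t : ℝ => δ * t) atTop atTop := this.2 tendsto_id
      exact Filter.Tendsto.congr (fun t => (neg_mul δ t).symm)
        (tendsto_neg_atTop_atBot.comp h2)
    have h3 : Tendsto (fun t : ℝ => Real.exp (-δ * t)) atTop (𝓝 0) :=
      Real.tendsto_exp_atBot.comp h1
    simpa using h3.const_mul (∑' k, |c k|)
  have hfin : Tendsto (fun t => c m + ∑' k, if k = m then (0:ℝ)
      else c k * Real.exp ((lam m - lam k) * t)) atTop (𝓝 (c m)) := by
    simpa using tendsto_const_nhds.add htail
  exact hfin.congr' (((eventually_ge_atTop (0:ℝ)).mono fun t ht => (eq1 t ht).symm))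

/-- Identification in an absolutely convergent Dirichlet-type series: if `r > 0`, `(lam k)` is
a strictly increasing sequence of positive reals, `Σ |c k| < ∞`, and
`exp (-r t) = Σ c k exp (-lam k t)` for all `t ≥ 0`, then there is an index `k₀` with
`r = lam k₀`, `c k₀ = 1`, and `c k = 0` for every `k ≠ k₀`. -/
theorem dirichlet_series_identification (r : ℝ) (hr : 0 < r)
    (lam : ℕ → ℝ) (hpos : ∀ k, 0 < lam k) (hmono : StrictMono lam)
    (c : ℕ → ℝ) (hsum : Summable fun k => |c k|)
    (h : ∀ t : ℝ, 0 ≤ t → Real.exp (-r * t) = ∑' k, c k * Real.exp (-lam k * t)) :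
    ∃ k₀ : ℕ, r = lam k₀ ∧ c k₀ = 1 ∧ ∀ k ≠ k₀, c k = 0 := by
  -- summability of the series at each t ≥ 0
  have hS : ∀ t : ℝ, 0 ≤ t → Summable (fun k => c k * Real.exp (-lam k * t)) := by
    intro t ht
    apply Summable.of_norm_bounded hsum
    intro k
    rw [norm_mul, Real.norm_eq_abs, Real.norm_eq_abs, Real.abs_exp]
    have : Real.exp (-lam k * t) ≤ 1 :=
      Real.exp_le_one_iff.2 (mul_nonpos_of_nonpos_of_nonneg (neg_nonpos.2 (hpos k).le) ht)
    calc |c k| * Real.exp (-lam k * t) ≤ |c k| * 1 :=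
          mul_le_mul_of_nonneg_left this (abs_nonneg _)
      _ = |c k| := mul_one _
  -- there exists k with c k ≠ 0
  have hex : ∃ k, c k ≠ 0 := by
    by_contra hall
    push_neg at hall
    have h0 := h 0 le_rfl
    simp [hall] at h0
  classical
  let k₀ := Nat.find hex
  have hk₀ : c k₀ ≠ 0 := Nat.find_spec hex
  have hcz : ∀ k < k₀, c k = 0 := fun k hk => by
    by_contra hne; exact Nat.find_min hex hk hne
  -- apply keyA
  have T := keyA lam hmono c hsum k₀ hcz
  have heqf : (fun t => Real.exp (lam k₀ * t) * ∑' k, c k * Real.exp (-lam k * t))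
      =ᶠ[atTop] (fun t => Real.exp ((lam k₀ - r) * t)) := by
    filter_upwards [eventually_ge_atTop (0:ℝ)] with t ht
    rw [← h t ht, ← Real.exp_add]
    ring_nf
  have T2 : Tendsto (fun t => Real.exp ((lam k₀ - r) * t)) atTop (𝓝 (c k₀)) :=
    T.congr' heqf
  have hre : r = lam k₀ := by
    rcases lt_trichotomy (lam k₀) r with hlt | heqr | hgt
    · exfalso
      have ha : lam k₀ - r < 0 := by linarith
      have h2 : Tendsto (fun t : ℝ => -(lam k₀ - r) * t) atTop atTop :=
        (tendsto_const_mul_atTop_of_pos (by linarith)).2 tendsto_id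
      have h1 : Tendsto (fun t : ℝ => (lam k₀ - r) * t) atTop atBot :=
        Filter.Tendsto.congr (fun t => by simp only [Function.comp_apply]; ring) (tendsto_neg_atTop_atBot.comp h2)
      have T0 : Tendsto (fun t => Real.exp ((lam k₀ - r) * t)) atTop (𝓝 0) :=
        Real.tendsto_exp_atBot.comp h1
      exact hk₀ (tendsto_nhds_unique T2 T0)
    · exact heqr.symm
    · exfalso
      have h2 : Tendsto (fun t : ℝ => (lam k₀ - r) * t) atTop atTop :=
        (tendsto_const_mul_atTop_of_pos (by linarith)).2 tendsto_id
      have hT : Tendsto (fun t => Real.exp ((lam k₀ - r) * t)) atTop atTop :=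
        Real.tendsto_exp_atTop.comp h2
      exact not_tendsto_nhds_of_tendsto_atTop hT (c k₀) T2
  have hc1 : c k₀ = 1 := by
    have Tconst : Tendsto (fun t => Real.exp ((lam k₀ - r) * t)) atTop (𝓝 1) := by
      have : (fun t => Real.exp ((lam k₀ - r) * t)) = fun _ : ℝ => (1:ℝ) := by
        funext t; rw [hre]; simp
      rw [this]; exact tendsto_const_nhds
    exact tendsto_nhds_unique T2 Tconst
  refine ⟨k₀, hre, hc1, ?_⟩
  -- subtract the k₀ term
  set c' : ℕ → ℝ := fun k => if k = k₀ then 0 else c k with hc'def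
  have hsum' : Summable fun k => |c' k| := by
    apply Summable.of_nonneg_of_le (fun k => abs_nonneg _) _ hsum
    intro k
    simp only [hc'def]
    split <;> simp
  have h' : ∀ t : ℝ, 0 ≤ t → (∑' k, c' k * Real.exp (-lam k * t)) = 0 := by
    intro t ht
    have hsplit := Summable.tsum_eq_add_tsum_ite (hS t ht) k₀
    have hterm : ∀ k, c' k * Real.exp (-lam k * t)
        = if k = k₀ then 0 else c k * Real.exp (-lam k * t) := by
      intro k; simp only [hc'def]; split <;> simp
    have e1 : (∑' k, c' k * Real.exp (-lam k * t))
        = ∑' k, if k = k₀ then (0:ℝ) else c k * Real.exp (-lam k * t) := tsum_congr hterm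
    rw [e1]
    have := h t ht
    rw [hre] at this
    rw [hc1] at hsplit
    linarith [hsplit, this]
  -- show all other coefficients vanish
  intro k hk
  by_contra hkne
  have hex' : ∃ m, c' m ≠ 0 := ⟨k, by simp [hc'def, hk, hkne]⟩
  let m := Nat.find hex'
  have hm : c' m ≠ 0 := Nat.find_spec hex'
  have hcz' : ∀ j < m, c' j = 0 := fun j hj => by
    by_contra hne; exact Nat.find_min hex' hj hne
  have T' := keyA lam hmono c' hsum' m hcz'
  have Tz : Tendsto (fun t => Real.exp (lam m * t) * ∑' k, c' k * Real.exp (-lam k * t))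
      atTop (𝓝 0) := by
    have heq0 : (fun _ : ℝ => (0:ℝ))
        =ᶠ[atTop] (fun t => Real.exp (lam m * t) * ∑' k, c' k * Real.exp (-lam k * t)) := by
      filter_upwards [eventually_ge_atTop (0:ℝ)] with t ht
      rw [h' t ht, mul_zero]
    exact tendsto_const_nhds.congr' heq0
  exact hm (tendsto_nhds_unique T' Tz)
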